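/- Let X ⊆ ℝⁿ be closed and nonempty. Then the closest-point function m (as a single-valued map) restricted to ℝⁿ \ closure(M_X) is locally Lipschitz. -/

import Mathlib

open Metric Set Filter
open scoped RealInnerProductSpace

noncomputable section

abbrev E (n : ℕ) := EuclideanSpace ℝ (Fin n)

/-- The set of closest points of `X` to `a`. -/
def mSet {n : ℕ} (X : Set (E n)) (a : E n) : Set (E n) :=
  {x ∈ X | dist a x = Metric.infDist a X}

/-- The medial axis: points with more than one closest point in `X`. -/
def medialAxis {n : ℕ} (X : Set (E n)) : Set (E n) :=
  {a | ∃ x ∈ mSet X a, ∃ y ∈ mSet X a, x ≠ y}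

variable {n : ℕ} {X : Set (E n)} {m : E n → E n}

lemma m_mem (hm : ∀ b ∉ medialAxis X, m b ∈ mSet X b) {b : E n} (hb : b ∉ medialAxis X) :
    m b ∈ X := (hm b hb).1

lemma m_dist (hm : ∀ b ∉ medialAxis X, m b ∈ mSet X b) {b : E n} (hb : b ∉ medialAxis X) :
    dist b (m b) = Metric.infDist b X := (hm b hb).2

lemma m_unique (hm : ∀ b ∉ medialAxis X, m b ∈ mSet X b) {b : E n} (hb : b ∉ medialAxis X)
    {z : E n} (hz : z ∈ X) (hdz : dist b z = Metric.infDist b X) : z = m b := by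
  by_contra hne
  exact hb ⟨z, ⟨hz, hdz⟩, m b, ⟨(hm b hb).1, (hm b hb).2⟩, hne⟩

lemma m_cont (hX : IsClosed X) (hm : ∀ b ∉ medialAxis X, m b ∈ mSet X b)
    {b : E n} (hb : b ∉ medialAxis X) {ε : ℝ} (hε : 0 < ε) :
    ∃ δ > 0, ∀ y, y ∉ medialAxis X → dist y b < δ → dist (m y) (m b) < ε := by
  set d := Metric.infDist b X with hd
  set C : Set (E n) := (X ∩ closedBall b (d + 1)) \ ball (m b) ε with hC
  have hCc : IsCompact C := ((isCompact_closedBall b (d+1)).inter_left hX).diff isOpen_ball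
  have key : ∃ δ > 0, δ ≤ 1/2 ∧ ∀ z ∈ C, d + 2*δ ≤ dist b z := by
    rcases C.eq_empty_or_nonempty with hCe | hCne
    · exact ⟨1/2, by norm_num, le_refl _, by simp [hCe]⟩
    · obtain ⟨z₀, hz₀C, hz₀min⟩ := hCc.exists_isMinOn hCne (continuous_dist.comp
        (Continuous.prodMk continuous_const continuous_id)).continuousOn (f := fun z => dist b z)
      have hz₀X : z₀ ∈ X := hz₀C.1.1
      have hgt : d < dist b z₀ := by
        rcases lt_or_eq_of_le (Metric.infDist_le_dist_of_mem hz₀X) with h | h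
        · exact h
        · exfalso
          have := m_unique hm hb hz₀X h.symm
          have hz₀nb : z₀ ∉ ball (m b) ε := hz₀C.2
          apply hz₀nb
          rw [this]
          exact mem_ball_self hε
      refine ⟨min (1/2) ((dist b z₀ - d)/3), lt_min (by norm_num) (by linarith), min_le_left _ _, ?_⟩
      intro z hz
      have h3 : d + 2 * min (1/2) ((dist b z₀ - d)/3) ≤ d + 2*((dist b z₀ - d)/3) := by
        have := min_le_right (1/2 : ℝ) ((dist b z₀ - d)/3); linarith
      have h9 : dist b z₀ ≤ dist b z := hz₀min hz
      linarith
  obtain ⟨δ, hδpos, hδhalf, hδ⟩ := key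
  refine ⟨δ, hδpos, ?_⟩
  intro y hyM hyb
  have hmyX : m y ∈ X := m_mem hm hyM
  have h1 : dist b (m y) < d + 2*δ := by
    have h2 : dist b (m y) ≤ dist b y + dist y (m y) := dist_triangle _ _ _
    have h3 : dist y (m y) = Metric.infDist y X := m_dist hm hyM
    have h4 : Metric.infDist y X ≤ Metric.infDist b X + dist y b :=
      Metric.infDist_le_infDist_add_dist
    rw [dist_comm b y] at h2
    linarith [hyb]
  have h5 : m y ∉ C := by
    intro hmyC
    have := hδ _ hmyC
    linarith
  have h7 : m y ∈ X ∩ closedBall b (d+1) := ⟨hmyX, by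
    simp only [mem_closedBall, dist_comm (m y) b]; linarith⟩
  have h8 : m y ∈ ball (m b) ε := by
    by_contra h9
    exact h5 ⟨h7, h9⟩
  simpa [dist_comm] using h8

set_option maxHeartbeats 1000000 in
lemma hasFDerivAt_infDist_sq (hX : IsClosed X) (hm : ∀ b ∉ medialAxis X, m b ∈ mSet X b)
    {b : E n} (hb : b ∉ closure (medialAxis X)) :
    HasFDerivAt (fun y => Metric.infDist y X ^ 2) (innerSL ℝ ((2:ℝ) • (b - m b))) b := by
  have hbM : b ∉ medialAxis X := fun h => hb (subset_closure h)
  rw [hasFDerivAt_iff_isLittleO_nhds_zero, Asymptotics.isLittleO_iff]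
  intro c hc
  -- δ₁ : ball b δ₁ avoids closure of medial axis
  obtain ⟨δ₁, hδ₁pos, hδ₁⟩ := Metric.isOpen_iff.mp
    (isClosed_closure (s := medialAxis X)).isOpen_compl b hb
  -- δ₂ : continuity of m
  obtain ⟨δ₂, hδ₂pos, hδ₂⟩ := m_cont hX hm hbM (ε := c/4) (by linarith)
  set δ := min δ₁ (min δ₂ (c/12)) with hδdef
  have hδpos : 0 < δ := lt_min hδ₁pos (lt_min hδ₂pos (by linarith))
  filter_upwards [Metric.ball_mem_nhds (0 : E n) hδpos]
  intro h hh
  have hnh : ‖h‖ < δ := by simpa [mem_ball, dist_eq_norm] using hh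
  set y := b + h with hy
  have hyb : dist y b < δ := by simp [hy, dist_eq_norm, hnh]
  have hyU : y ∉ closure (medialAxis X) := hδ₁ (by
    simp only [mem_ball]; exact lt_of_lt_of_le hyb (min_le_left _ _))
  have hyM : y ∉ medialAxis X := fun hh' => hyU (subset_closure hh')
  set p := m b with hp
  set q := m y with hq
  have hqp : dist q p < c/4 := hδ₂ y hyM (lt_of_lt_of_le hyb (le_trans (min_le_right _ _) (min_le_left _ _)))
  have hnhc : ‖h‖ < c/12 := lt_of_lt_of_le hnh (le_trans (min_le_right _ _) (min_le_right _ _))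
  have hbp : Metric.infDist b X = ‖b - p‖ := by rw [← dist_eq_norm]; exact (m_dist hm hbM).symm
  have hyq : Metric.infDist y X = ‖y - q‖ := by rw [← dist_eq_norm]; exact (m_dist hm hyM).symm
  have hpX : p ∈ X := m_mem hm hbM
  have hqX : q ∈ X := m_mem hm hyM
  -- upper bound
  have hub : Metric.infDist y X ^ 2 ≤ ‖y - p‖^2 := by
    have := Metric.infDist_le_dist_of_mem (x := y) hpX
    rw [dist_eq_norm] at this
    exact pow_le_pow_left₀ Metric.infDist_nonneg this 2
  have hlb : Metric.infDist b X ^ 2 ≤ ‖b - q‖^2 := by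
    have := Metric.infDist_le_dist_of_mem (x := b) hqX
    rw [dist_eq_norm] at this
    exact pow_le_pow_left₀ Metric.infDist_nonneg this 2
  have e1 : ‖y - p‖^2 = ‖h‖^2 + 2*⟪h, b - p⟫ + ‖b - p‖^2 := by
    have : y - p = h + (b - p) := by simp [hy]; abel
    rw [this, norm_add_sq_real]
  have e2 : ‖b - q‖^2 = ‖y - q‖^2 - 2*⟪y - q, h⟫ + ‖h‖^2 := by
    have : b - q = (y - q) - h := by simp [hy]; abel
    rw [this, norm_sub_sq_real]
  have e3 : (innerSL ℝ ((2:ℝ) • (b - p))) h = 2*⟪b - p, h⟫ := by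
    rw [innerSL_apply_apply, real_inner_smul_left]
  have hcs : ⟪(y - q) - (b - p), h⟫ ≥ -(‖(y - q) - (b - p)‖*‖h‖) := by
    have := abs_real_inner_le_norm ((y - q) - (b - p)) h
    have := abs_le.mp this
    linarith [this.1]
  have hnrm : ‖(y - q) - (b - p)‖ ≤ ‖h‖ + dist q p := by
    have : (y - q) - (b - p) = h - (q - p) := by simp [hy]; abel
    rw [this, dist_eq_norm]
    exact norm_sub_le _ _
  have hinner_split : ⟪y - q, h⟫ = ⟪(y - q) - (b - p), h⟫ + ⟪b - p, h⟫ := by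
    simp only [inner_sub_left]; ring
  -- combine
  have hA_up : Metric.infDist y X ^2 - Metric.infDist b X ^2 - 2*⟪b - p, h⟫ ≤ ‖h‖^2 := by
    have h1 : Metric.infDist b X ^2 = ‖b - p‖^2 := by rw [hbp]
    have h2 : ⟪h, b - p⟫ = ⟪b - p, h⟫ := real_inner_comm _ _
    nlinarith [hub, e1]
  have hA_lo : Metric.infDist y X ^2 - Metric.infDist b X ^2 - 2*⟪b - p, h⟫ ≥
      -(c * ‖h‖) := by
    have h1 : Metric.infDist y X ^2 = ‖y - q‖^2 := by rw [hyq]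
    have h4 : ‖(y - q) - (b - p)‖*‖h‖ ≤ (‖h‖ + c/4)*‖h‖ := by
      apply mul_le_mul_of_nonneg_right _ (norm_nonneg _)
      linarith [hnrm, hqp]
    nlinarith [hlb, e2, hcs, hinner_split, hnhc, norm_nonneg h, hc]
  have : |Metric.infDist y X ^2 - Metric.infDist b X ^2 - (innerSL ℝ ((2:ℝ) • (b - p))) h|
      ≤ c * ‖h‖ := by
    rw [e3, abs_le]
    constructor
    · linarith
    · nlinarith [hA_up, hnhc, norm_nonneg h, hc]
  simpa [hy, Real.norm_eq_abs] using this

lemma hasFDerivAt_infDist (hX : IsClosed X) (hm : ∀ b ∉ medialAxis X, m b ∈ mSet X b)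
    {b : E n} (hb : b ∉ closure (medialAxis X)) (h0 : Metric.infDist b X ≠ 0) :
    HasFDerivAt (fun y => Metric.infDist y X)
      (innerSL ℝ ((Metric.infDist b X)⁻¹ • (b - m b))) b := by
  have hbM : b ∉ medialAxis X := fun h => hb (subset_closure h)
  have h2 := hasFDerivAt_infDist_sq hX hm hb
  have hs : HasDerivAt Real.sqrt (1/(2*Real.sqrt ((Metric.infDist b X)^2)))
      ((fun y => Metric.infDist y X ^ 2) b) := Real.hasDerivAt_sqrt (pow_ne_zero _ h0)
  have hcomp := hs.comp_hasFDerivAt b h2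
  have hfn : (Real.sqrt ∘ fun y => Metric.infDist y X ^ 2) = fun y => Metric.infDist y X := by
    funext y
    simp [Function.comp, Real.sqrt_sq Metric.infDist_nonneg]
  rw [hfn] at hcomp
  refine hcomp.congr_fderiv (Eq.symm ?_)
  have hsq : Real.sqrt ((Metric.infDist b X)^2) = Metric.infDist b X :=
    Real.sqrt_sq Metric.infDist_nonneg
  ext v
  rw [ContinuousLinearMap.smul_apply, innerSL_apply_apply, innerSL_apply_apply, hsq,
    real_inner_smul_left, real_inner_smul_left]
  have : Metric.infDist b X ≠ 0 := h0
  field_simp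
  rw [smul_eq_mul]
  field_simp

lemma medialAxis_singleton (w : E n) : medialAxis {w} = ∅ := by
  ext z
  simp only [medialAxis, mSet, mem_setOf_eq, mem_empty_iff_false, iff_false]
  rintro ⟨x, ⟨hx, -⟩, y, ⟨hy, -⟩, hxy⟩
  exact hxy (by rw [mem_singleton_iff.mp hx, mem_singleton_iff.mp hy])

lemma hasFDerivAt_norm_sub {w b : E n} (hwb : b ≠ w) :
    HasFDerivAt (fun y => Metric.infDist y ({w} : Set (E n)))
      (innerSL ℝ ((dist b w)⁻¹ • (b - w))) b := by
  have hm' : ∀ y, y ∉ medialAxis ({w} : Set (E n)) → (fun _ => w) y ∈ mSet {w} y := by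
    intro y _
    exact ⟨mem_singleton w, by rw [Metric.infDist_singleton]⟩
  have hb' : b ∉ closure (medialAxis ({w} : Set (E n))) := by
    rw [medialAxis_singleton, closure_empty]; exact notMem_empty b
  have h0 : Metric.infDist b ({w} : Set (E n)) ≠ 0 := by
    rw [Metric.infDist_singleton]
    exact dist_ne_zero.mpr hwb
  have := hasFDerivAt_infDist (m := fun _ => w) isClosed_singleton hm' hb' h0
  simpa [Metric.infDist_singleton] using this

set_option maxHeartbeats 1000000 in
set_option synthInstance.maxHeartbeats 400000 in
lemma extension_lemma (hX : IsClosed X) (hm : ∀ b ∉ medialAxis X, m b ∈ mSet X b)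
    {a : E n} {ρ : ℝ} (hρ : 0 < ρ)
    (hsafe : closedBall a ρ ⊆ (closure (medialAxis X))ᶜ)
    {b : E n} (hba : dist b a < ρ/4) (hdb : 0 < Metric.infDist b X) :
    ∃ y, dist y b = ρ/2 ∧ Metric.infDist y X = Metric.infDist b X + ρ/2 := by
  set T := ρ/2 with hT
  set d := Metric.infDist b X with hd
  have hTpos : 0 < T := by rw [hT]; linarith
  have hsub : ∀ y : E n, dist y b ≤ T → y ∉ closure (medialAxis X) := by
    intro y hy
    apply hsafe
    rw [mem_closedBall]
    calc dist y a ≤ dist y b + dist b a := dist_triangle _ _ _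
    _ ≤ T + ρ/4 := by linarith
    _ ≤ ρ := by rw [hT]; linarith
  have hbU : b ∉ closure (medialAxis X) := hsub b (by simp [hTpos.le])
  have hbM : b ∉ medialAxis X := fun h => hbU (subset_closure h)
  -- Step 1 : for every σ ∈ (0,1) there is a boundary point with large distance
  have step : ∀ σ : ℝ, 0 < σ → σ < 1 →
      ∃ y, dist y b = T ∧ d + (1-σ)*T ≤ Metric.infDist y X := by
    intro σ hσ0 hσ1
    set G : E n → ℝ := fun y => Metric.infDist y X - (1-σ) * Metric.infDist y {b} with hG
    have hGc : ContinuousOn G (closedBall b T) :=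
      ((Metric.continuous_infDist_pt X).sub
        (continuous_const.mul (Metric.continuous_infDist_pt {b}))).continuousOn
    obtain ⟨y₀, hy₀F, hy₀max⟩ := (isCompact_closedBall b T).exists_isMaxOn
      ⟨b, mem_closedBall_self hTpos.le⟩ hGc
    have hGb : G b = d := by simp [hG, Metric.infDist_singleton, hd]
    have hy₀G : d ≤ G y₀ := by
      rw [← hGb]; exact hy₀max (mem_closedBall_self hTpos.le)
    have hsing : Metric.infDist y₀ ({b} : Set (E n)) = dist y₀ b := Metric.infDist_singleton
    have hdy₀ : d ≤ Metric.infDist y₀ X := by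
      have h1 : (0:ℝ) ≤ dist y₀ b := dist_nonneg
      have h2 : G y₀ = Metric.infDist y₀ X - (1-σ) * dist y₀ b := by rw [hG]; simp [hsing]
      nlinarith
    have hy₀U : y₀ ∉ closure (medialAxis X) := hsub y₀ (mem_closedBall.mp hy₀F)
    have hy₀M : y₀ ∉ medialAxis X := fun h => hy₀U (subset_closure h)
    have hy₀0 : Metric.infDist y₀ X ≠ 0 := by
      intro h; rw [h] at hdy₀; exact absurd (le_antisymm hdy₀ hdb.le) (by linarith [hdb] : ¬ (d:ℝ) = 0)
    by_cases hyb : y₀ = b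
    · -- maximum at the center: contradiction with outward derivative 1
      exfalso
      set p := m b with hp
      have hbp : ‖b - p‖ = d := by rw [← dist_eq_norm]; exact m_dist hm hbM
      set u : E n := d⁻¹ • (b - p) with hu
      have hun : ‖u‖ = 1 := by
        rw [hu, norm_smul, hbp, Real.norm_eq_abs, abs_inv, abs_of_pos hdb]
        field_simp
      have hDd := hasFDerivAt_infDist hX hm hbU hdb.ne'
      have hline : HasDerivAt (fun s : ℝ => b + s • u) u 0 := by
        simpa using ((hasDerivAt_id (0:ℝ)).smul_const u).const_add b
      have hg0 : b + (0:ℝ) • u = b := by simp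
      have hDd' : HasFDerivAt (fun y => Metric.infDist y X)
          (innerSL ℝ ((Metric.infDist b X)⁻¹ • (b - m b))) ((fun s : ℝ => b + s • u) 0) := by
        simpa using hDd
      have hcomp : HasDerivAt (fun s : ℝ => Metric.infDist (b + s • u) X)
          ((innerSL ℝ ((Metric.infDist b X)⁻¹ • (b - m b))) u) 0 :=
        HasFDerivAt.comp_hasDerivAt (l := fun y => Metric.infDist y X) 0 hDd' hline
      have hval : (innerSL ℝ ((Metric.infDist b X)⁻¹ • (b - m b))) u = 1 := by
        rw [innerSL_apply_apply]
        have huu : (Metric.infDist b X)⁻¹ • (b - m b) = u := by rw [hu, hp, hd]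
        rw [huu, real_inner_self_eq_norm_sq, hun]; norm_num
      rw [hval] at hcomp
      have hslope := hasDerivAt_iff_tendsto_slope.mp hcomp
      have hev1 : ∀ᶠ s in nhdsWithin (0:ℝ) {(0:ℝ)}ᶜ,
          1 - σ < slope (fun s : ℝ => Metric.infDist (b + s • u) X) 0 s :=
        hslope.eventually (eventually_gt_nhds (by linarith))
      have hsubIoi : Set.Ioi (0:ℝ) ⊆ {(0:ℝ)}ᶜ := by
        intro x hx; simp only [mem_compl_iff, mem_singleton_iff]; exact ne_of_gt hx
      have hev2 : ∀ᶠ s in nhdsWithin (0:ℝ) (Set.Ioi (0:ℝ)),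
          1 - σ < slope (fun s : ℝ => Metric.infDist (b + s • u) X) 0 s :=
        hev1.filter_mono (nhdsWithin_mono _ hsubIoi)
      have hev3 : ∀ᶠ s in nhdsWithin (0:ℝ) (Set.Ioi (0:ℝ)), s < T :=
        eventually_nhdsWithin_of_eventually_nhds (eventually_lt_nhds hTpos)
      have hev4 : ∀ᶠ s in nhdsWithin (0:ℝ) (Set.Ioi (0:ℝ)), 0 < s :=
        eventually_mem_nhdsWithin
      obtain ⟨s, hs1, hs2, hs3⟩ := (hev2.and (hev3.and hev4)).exists
      have hnsu : ‖s • u‖ = s := by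
        rw [norm_smul, hun, Real.norm_eq_abs, abs_of_pos hs3]; ring
      have hmem : b + s • u ∈ closedBall b T := by
        rw [mem_closedBall, dist_eq_norm, add_sub_cancel_left, hnsu]
        linarith
      have hmax : G (b + s • u) ≤ d := by
        have := hy₀max hmem
        rw [hyb] at this
        rw [← hGb]; exact this
      have hdistb : dist (b + s • u) b = s := by
        rw [dist_eq_norm, add_sub_cancel_left, hnsu]
      have hGs : G (b + s • u) = Metric.infDist (b + s • u) X - (1-σ)*s := by
        rw [hG]; simp only [Metric.infDist_singleton, hdistb]
      have hf0 : Metric.infDist (b + (0:ℝ) • u) X = d := by rw [hg0]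
      have hslope_val : slope (fun s : ℝ => Metric.infDist (b + s • u) X) 0 s
          = (Metric.infDist (b + s • u) X - d)/s := by
        rw [slope_def_field, hf0, sub_zero]
      rw [hslope_val] at hs1
      have hgt : d + (1-σ)*s < Metric.infDist (b + s • u) X := by
        have h := (lt_div_iff₀ hs3).mp hs1
        linarith
      linarith [hmax, hGs.symm.le]
    · by_cases hbd : dist y₀ b = T
      · refine ⟨y₀, hbd, ?_⟩
        have h2 : G y₀ = Metric.infDist y₀ X - (1-σ) * dist y₀ b := by rw [hG]; simp [hsing]
        rw [hbd] at h2
        linarith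
      · -- interior critical point: contradiction with |∇d| = 1
        exfalso
        have hint : dist y₀ b < T := lt_of_le_of_ne (mem_closedBall.mp hy₀F) hbd
        have hloc : IsLocalMax G y₀ := hy₀max.isLocalMax
          (Filter.mem_of_superset (isOpen_ball.mem_nhds (mem_ball.mpr hint)) ball_subset_closedBall)
        have hDd := hasFDerivAt_infDist hX hm hy₀U hy₀0
        have hDn := hasFDerivAt_norm_sub (w := b) hyb
        have hG' : HasFDerivAt G
            (innerSL ℝ ((Metric.infDist y₀ X)⁻¹ • (y₀ - m y₀)) -
              (1-σ) • innerSL ℝ ((dist y₀ b)⁻¹ • (y₀ - b))) y₀ := by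
          exact hDd.sub (hDn.const_mul (1-σ))
        have hz := hloc.hasFDerivAt_eq_zero hG'
        have heq : innerSL ℝ ((Metric.infDist y₀ X)⁻¹ • (y₀ - m y₀)) =
            (1-σ) • innerSL ℝ ((dist y₀ b)⁻¹ • (y₀ - b)) := by
          rw [← sub_eq_zero]; exact hz
        have hymy : ‖y₀ - m y₀‖ = Metric.infDist y₀ X := by
          rw [← dist_eq_norm]; exact m_dist hm hy₀M
        have hd0' : (0:ℝ) < Metric.infDist y₀ X := lt_of_lt_of_le hdb hdy₀
        have h1 : ‖innerSL ℝ ((Metric.infDist y₀ X)⁻¹ • (y₀ - m y₀))‖ = 1 := by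
          rw [innerSL_apply_norm, norm_smul, hymy, Real.norm_eq_abs, abs_inv,
            abs_of_pos hd0']
          field_simp
        have hdyb : (0:ℝ) < dist y₀ b := dist_pos.mpr hyb
        have h2 : ‖(1-σ) • innerSL ℝ ((dist y₀ b)⁻¹ • (y₀ - b))‖ = 1 - σ := by
          have hnin : ‖innerSL ℝ ((dist y₀ b)⁻¹ • (y₀ - b))‖ = 1 := by
            rw [innerSL_apply_norm, norm_smul, Real.norm_eq_abs, abs_inv, abs_of_pos hdyb,
              ← dist_eq_norm]
            field_simp
          have h3 := norm_smul (1-σ) (innerSL ℝ ((dist y₀ b)⁻¹ • (y₀ - b)))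
          rw [h3, hnin, Real.norm_eq_abs, abs_of_pos (by linarith : (0:ℝ) < 1 - σ)]
          ring
        rw [heq, h2] at h1
        linarith
  -- Step 2 : pass to the limit σ → 0 using the maximizer of the distance
  obtain ⟨y₁, hy₁F, hy₁max⟩ := (isCompact_closedBall b T).exists_isMaxOn
    ⟨b, mem_closedBall_self hTpos.le⟩ (Metric.continuous_infDist_pt X).continuousOn
  have h1 : d + T ≤ Metric.infDist y₁ X := by
    by_contra hlt
    push_neg at hlt
    set g : ℝ := d + T - Metric.infDist y₁ X with hg
    have hgpos : 0 < g := by rw [hg]; linarith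
    set σ := min (1/2) (g/(2*T)) with hσdef
    have hσ0 : 0 < σ := lt_min (by norm_num) (div_pos hgpos (by linarith))
    have hσ1 : σ < 1 := lt_of_le_of_lt (min_le_left _ _) (by norm_num)
    obtain ⟨y₂, hy₂b, hy₂d⟩ := step σ hσ0 hσ1
    have hmem : y₂ ∈ closedBall b T := by rw [mem_closedBall, hy₂b]
    have hle := hy₁max hmem
    have hle' : Metric.infDist y₂ X ≤ Metric.infDist y₁ X := hle
    have hσT : σ * T ≤ g/2 := by
      have hmr := min_le_right (1/2 : ℝ) (g/(2*T))
      have : σ * T ≤ (g/(2*T))*T := mul_le_mul_of_nonneg_right hmr hTpos.le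
      have he : (g/(2*T))*T = g/2 := by field_simp
      linarith [he ▸ this]
    nlinarith [hy₂d]
  have h2 : Metric.infDist y₁ X ≤ d + dist y₁ b := by
    have := Metric.infDist_le_infDist_add_dist (x := y₁) (y := b) (s := X)
    linarith [this]
  have h3 : dist y₁ b ≤ T := mem_closedBall.mp hy₁F
  have h4 : dist y₁ b = T := le_antisymm h3 (by linarith)
  exact ⟨y₁, h4, le_antisymm (by rw [← h4]; linarith) (by linarith)⟩

set_option maxHeartbeats 1000000 in
lemma key_lemma (hX : IsClosed X) (hm : ∀ b ∉ medialAxis X, m b ∈ mSet X b)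
    {a : E n} {ρ : ℝ} (hρ : 0 < ρ)
    (hsafe : closedBall a ρ ⊆ (closure (medialAxis X))ᶜ)
    {b : E n} (hba : dist b a < ρ/4) (hdb : 0 < Metric.infDist b X)
    {z : E n} (hz : z ∈ X) :
    ⟪b - m b, z - m b⟫ ≤ ‖z - m b‖^2 *
      (Metric.infDist b X / (2*(Metric.infDist b X + ρ/2))) := by
  obtain ⟨y, hyb, hyd⟩ := extension_lemma hX hm hρ hsafe hba hdb
  set T := ρ/2 with hT
  set d := Metric.infDist b X with hd
  set p := m b with hp
  have hTpos : 0 < T := by rw [hT]; linarith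
  have hbU : b ∉ closure (medialAxis X) := by
    apply hsafe
    rw [mem_closedBall]
    linarith [hba]
  have hbM : b ∉ medialAxis X := fun h => hbU (subset_closure h)
  have hbp : ‖b - p‖ = d := by rw [← dist_eq_norm]; exact m_dist hm hbM
  have hpX : p ∈ X := m_mem hm hbM
  have hnyb : ‖y - b‖ = T := by rw [← dist_eq_norm]; exact hyb
  have h2 : d + T ≤ ‖y - p‖ := by
    rw [← dist_eq_norm, ← hyd]
    exact Metric.infDist_le_dist_of_mem hpX
  have h1 : ‖y - p‖ ≤ T + d := by
    calc ‖y - p‖ = ‖(y - b) + (b - p)‖ := by rw [show y - p = (y - b) + (b - p) by abel]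
    _ ≤ ‖y - b‖ + ‖b - p‖ := norm_add_le _ _
    _ = T + d := by rw [hnyb, hbp]
  have hyp : ‖y - p‖ = d + T := le_antisymm (by linarith) h2
  have hin : ⟪y - b, b - p⟫ = ‖y - b‖ * ‖b - p‖ := by
    have hexp := norm_add_sq_real (y - b) (b - p)
    rw [show (y - b) + (b - p) = y - p by abel] at hexp
    rw [hnyb, hbp]
    nlinarith [hexp, hyp, hnyb, hbp]
  have hcol := inner_eq_norm_mul_iff_real.mp hin
  rw [hnyb, hbp] at hcol
  -- hcol : d • (y - b) = T • (b - p)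
  have hyp2 : y - p = ((d+T)/d) • (b - p) := by
    have h5 : d • (y - p) = (d + T) • (b - p) := by
      have : d • (y - p) = d • (y - b) + d • (b - p) := by
        rw [← smul_add]
        congr 1
        abel
      rw [this, hcol, ← add_smul, add_comm T d]
    have h6 := congrArg (fun v => d⁻¹ • v) h5
    simp only [smul_smul] at h6
    rw [inv_mul_cancel₀ hdb.ne', one_smul] at h6
    rw [h6, div_eq_inv_mul, ← smul_smul]
  have h3 : d + T ≤ dist y z := by rw [← hyd]; exact Metric.infDist_le_dist_of_mem hz
  have h4 : 2*⟪y - p, z - p⟫ ≤ ‖z - p‖^2 := by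
    have hexp := norm_sub_sq_real (y - p) (z - p)
    rw [show (y - p) - (z - p) = y - z by abel] at hexp
    have hyz2 : (d+T)^2 ≤ ‖y - z‖^2 := by
      rw [← dist_eq_norm]
      exact pow_le_pow_left₀ (by linarith) h3 2
    nlinarith [hexp, hyp]
  rw [hyp2, real_inner_smul_left] at h4
  have hdT : (0:ℝ) < d + T := by linarith
  have h5 : 2*((d+T) * ⟪b - p, z - p⟫) ≤ ‖z - p‖^2 * d := by
    have h6 := mul_le_mul_of_nonneg_right h4 hdb.le
    have h7 : 2*((d+T)/d * ⟪b - p, z - p⟫) * d = 2*((d+T) * ⟪b - p, z - p⟫) := by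
      field_simp
    rw [h7] at h6
    linarith [h6]
  rw [mul_div_assoc']
  rw [le_div_iff₀ (by linarith : (0:ℝ) < 2*(d+T))]
  linarith [h5]

set_option maxHeartbeats 1000000 in
theorem stmt_4 {n : ℕ} (X : Set (E n)) (hX : IsClosed X) (hne : X.Nonempty)
    (m : E n → E n) (hm : ∀ b ∉ medialAxis X, m b ∈ mSet X b)
    (a : E n) (ha : a ∉ closure (medialAxis X)) :
    ∃ ε > 0, ∃ C : NNReal, LipschitzOnWith C m (Metric.ball a ε) := by
  obtain ⟨ρ', hρ'pos, hρ'⟩ := Metric.isOpen_iff.mp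
    (isClosed_closure (s := medialAxis X)).isOpen_compl a ha
  set ρ := ρ'/2 with hρdef
  have hρpos : 0 < ρ := by rw [hρdef]; linarith
  have hsafe : closedBall a ρ ⊆ (closure (medialAxis X))ᶜ :=
    subset_trans (closedBall_subset_ball (by rw [hρdef]; linarith)) hρ'
  set T := ρ/2 with hTdef
  have hTpos : 0 < T := by rw [hTdef]; linarith
  set D := Metric.infDist a X + ρ/4 with hDdef
  have hDpos : 0 < D := by
    have := Metric.infDist_nonneg (x := a) (s := X)
    rw [hDdef]; linarith
  set Cr := max 2 ((D+T)/T) with hCrdef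
  have hCr2 : (2:ℝ) ≤ Cr := le_max_left _ _
  have hCrDT : (D+T)/T ≤ Cr := le_max_right _ _
  have hCrnn : (0:ℝ) ≤ Cr := by linarith
  refine ⟨ρ/4, by linarith, Real.toNNReal Cr, LipschitzOnWith.of_dist_le_mul ?_⟩
  intro b hb c hc
  rw [Real.coe_toNNReal _ hCrnn]
  have hba : dist b a < ρ/4 := mem_ball.mp hb
  have hca : dist c a < ρ/4 := mem_ball.mp hc
  have hbU : b ∉ closure (medialAxis X) := hsafe (by rw [mem_closedBall]; linarith)
  have hcU : c ∉ closure (medialAxis X) := hsafe (by rw [mem_closedBall]; linarith)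
  have hbM : b ∉ medialAxis X := fun h => hbU (subset_closure h)
  have hcM : c ∉ medialAxis X := fun h => hcU (subset_closure h)
  have hdmb : dist b (m b) = Metric.infDist b X := m_dist hm hbM
  have hdmc : dist c (m c) = Metric.infDist c X := m_dist hm hcM
  by_cases h0b : Metric.infDist b X = 0
  · -- b is in X, direct bound
    have hmb : m b = b := by
      rw [h0b] at hdmb
      exact (dist_eq_zero.mp hdmb).symm
    have h2 : Metric.infDist c X ≤ dist c b := by
      have := Metric.infDist_le_infDist_add_dist (x := c) (y := b) (s := X)
      rw [h0b] at this; linarith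
    have h1 : dist (m b) (m c) ≤ 2 * dist b c := by
      rw [hmb]
      calc dist b (m c) ≤ dist b c + dist c (m c) := dist_triangle _ _ _
      _ = dist b c + Metric.infDist c X := by rw [hdmc]
      _ ≤ dist b c + dist c b := by linarith
      _ = 2 * dist b c := by rw [dist_comm c b]; ring
    calc dist (m b) (m c) ≤ 2 * dist b c := h1
    _ ≤ Cr * dist b c := mul_le_mul_of_nonneg_right hCr2 dist_nonneg
  by_cases h0c : Metric.infDist c X = 0
  · have hmc : m c = c := by
      rw [h0c] at hdmc
      exact (dist_eq_zero.mp hdmc).symm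
    have h2 : Metric.infDist b X ≤ dist b c := by
      have := Metric.infDist_le_infDist_add_dist (x := b) (y := c) (s := X)
      rw [h0c] at this; linarith
    have h1 : dist (m b) (m c) ≤ 2 * dist b c := by
      rw [hmc]
      calc dist (m b) c ≤ dist (m b) b + dist b c := dist_triangle _ _ _
      _ = Metric.infDist b X + dist b c := by rw [dist_comm, hdmb]
      _ ≤ 2 * dist b c := by linarith
    calc dist (m b) (m c) ≤ 2 * dist b c := h1
    _ ≤ Cr * dist b c := mul_le_mul_of_nonneg_right hCr2 dist_nonneg
  -- main case
  have hdb : 0 < Metric.infDist b X :=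
    lt_of_le_of_ne Metric.infDist_nonneg (Ne.symm h0b)
  have hdc : 0 < Metric.infDist c X :=
    lt_of_le_of_ne Metric.infDist_nonneg (Ne.symm h0c)
  set p := m b with hp
  set q := m c with hq
  have hpX : p ∈ X := m_mem hm hbM
  have hqX : q ∈ X := m_mem hm hcM
  have k1 := key_lemma hX hm hρpos hsafe hba hdb hqX
  have k2 := key_lemma hX hm hρpos hsafe hca hdc hpX
  set β := D/(2*(D+T)) with hβdef
  have hfrac : ∀ t : ℝ, 0 < t → t ≤ D → t/(2*(t+T)) ≤ β := by
    intro t ht htD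
    rw [hβdef, div_le_div_iff₀ (by linarith) (by linarith)]
    nlinarith
  have hdbD : Metric.infDist b X ≤ D := by
    have := Metric.infDist_le_infDist_add_dist (x := b) (y := a) (s := X)
    rw [hDdef]; linarith
  have hdcD : Metric.infDist c X ≤ D := by
    have := Metric.infDist_le_infDist_add_dist (x := c) (y := a) (s := X)
    rw [hDdef]; linarith
  have hnrev : ‖p - q‖ = ‖q - p‖ := norm_sub_rev _ _
  have k1' : ⟪b - p, q - p⟫ ≤ ‖q - p‖^2 * β := by
    calc ⟪b - p, q - p⟫ ≤ ‖q - p‖^2 * (Metric.infDist b X / (2*(Metric.infDist b X + T))) := k1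
    _ ≤ ‖q - p‖^2 * β := mul_le_mul_of_nonneg_left (hfrac _ hdb hdbD) (sq_nonneg _)
  have k2' : ⟪c - q, p - q⟫ ≤ ‖q - p‖^2 * β := by
    calc ⟪c - q, p - q⟫ ≤ ‖p - q‖^2 * (Metric.infDist c X / (2*(Metric.infDist c X + T))) := k2
    _ ≤ ‖p - q‖^2 * β := mul_le_mul_of_nonneg_left (hfrac _ hdc hdcD) (sq_nonneg _)
    _ = ‖q - p‖^2 * β := by rw [hnrev]
  have hw2 : ⟪q - p, q - p⟫ = ‖q - p‖^2 := real_inner_self_eq_norm_sq _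
  have e1 : ⟪q - p, c - b⟫ = ⟪q - p, c - q⟫ + ⟪q - p, q - p⟫ - ⟪q - p, b - p⟫ := by
    rw [show c - b = (c - q) + ((q - p) - (b - p)) by abel]
    simp only [inner_add_right, inner_sub_right]
    ring
  have e2 : ⟪q - p, c - q⟫ = - ⟪c - q, p - q⟫ := by
    rw [real_inner_comm, show q - p = -(p - q) by abel, inner_neg_right]
  have e3 : ⟪q - p, b - p⟫ = ⟪b - p, q - p⟫ := real_inner_comm _ _
  have hcs : ⟪q - p, c - b⟫ ≤ ‖q - p‖ * ‖c - b‖ := real_inner_le_norm _ _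
  have hnn : ‖q - p‖^2 * (1 - 2*β) ≤ ‖q - p‖ * ‖c - b‖ := by
    have h6 : ‖q - p‖^2 - 2*(‖q - p‖^2 * β) ≤ ⟪q - p, c - b⟫ := by
      rw [e1, e2, e3, hw2]
      linarith [k1', k2']
    nlinarith [hcs]
  have hβT : 1 - 2*β = T/(D+T) := by
    rw [hβdef]
    field_simp
    ring
  rcases eq_or_lt_of_le (norm_nonneg (q - p)) with hw0 | hwpos
  · have : dist (m b) (m c) = 0 := by
      rw [dist_eq_norm, hnrev, ← hw0]
    rw [this]
    positivity
  · have h7 : ‖q - p‖ * (T/(D+T)) ≤ ‖c - b‖ := by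
      have h8 : ‖q - p‖ * (‖q - p‖ * (T/(D+T))) ≤ ‖q - p‖ * ‖c - b‖ := by
        rw [hβT] at hnn
        nlinarith [hnn]
      exact le_of_mul_le_mul_left h8 hwpos
    have h9 : ‖q - p‖ ≤ ((D+T)/T) * ‖c - b‖ := by
      have h10 := mul_le_mul_of_nonneg_right h7 (le_of_lt (div_pos (by linarith) hTpos) : (0:ℝ) ≤ (D+T)/T)
      have h11 : ‖q - p‖ * (T/(D+T)) * ((D+T)/T) = ‖q - p‖ := by
        field_simp
      rw [h11] at h10
      linarith [h10]
    calc dist (m b) (m c) = ‖q - p‖ := by rw [dist_eq_norm, hnrev]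
    _ ≤ ((D+T)/T) * ‖c - b‖ := h9
    _ = ((D+T)/T) * dist b c := by rw [← dist_eq_norm, dist_comm c b]
    _ ≤ Cr * dist b c := mul_le_mul_of_nonneg_right hCrDT dist_nonneg
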